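/- arXiv:1109.4138 — 3 statements merged into one kernel-verified Lean document; each statement's English description precedes it below -/
import Mathlib

section
/- Kemperman's formula: if (W_n)_{n≥0} is a random walk on ℤ started at 0 whose jump distribution ν is supported on {-1,0,1,2,…}, and ζ_j = inf{n ≥ 0 : W_n = -j} for j ≥ 1, then for all integers 1 ≤ j ≤ n, P[ζ_j = n] = (j/n) · P[W_n = -j]. -/
open MeasureTheory ProbabilityTheory
open scoped ENNReal NNReal


namespace Kemp

open Finset

variable (y : ℕ → ℤ)

/-- partial sums -/
def s (m : ℕ) : ℤ := ∑ i ∈ Finset.range m, y i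

lemma s_add (r m : ℕ) : s y (r + m) = s y r + ∑ i ∈ Finset.range m, y (r + i) := by
  simp [s, Finset.sum_range_add]

lemma s_succ (m : ℕ) : s y (m + 1) = s y m + y m := by
  simp [s, Finset.sum_range_succ]

/-- window sums of a periodic sequence -/
lemma window (n j : ℕ) (hper : ∀ i, y (i + n) = y i)
    (hsum : ∑ i ∈ Finset.range n, y i = -(j : ℤ)) (r : ℕ) :
    s y (r + n) = s y r - j := by
  induction r with
  | zero => simp [s, hsum]
  | succ r ih =>
      have h1 : r + 1 + n = (r + n) + 1 := by omega
      rw [h1, s_succ, s_succ, hper r, ih]; ring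

/-- skip-free: if partial sums avoid `-j` they stay above `-j` -/
lemma gt_of_ne (n j : ℕ) (hj : 1 ≤ j) (hy1 : ∀ i, -1 ≤ y i) (r : ℕ)
    (h : ∀ m, m < n → s y (r + m) - s y r ≠ -(j : ℤ)) :
    ∀ m, m < n → s y (r + m) - s y r > -(j : ℤ)  := by
  intro m
  induction m with
  | zero =>
      intro _
      have : (1 : ℤ) ≤ (j : ℤ) := by exact_mod_cast hj
      simp; omega
  | succ m ih =>
      intro hm
      have h1 := ih (by omega)
      have h2 := h (m + 1) hm
      have h3 : s y (r + (m + 1)) = s y (r + m) + y (r + m) := by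
        rw [show r + (m + 1) = (r + m) + 1 by omega, s_succ]
      have h4 := hy1 (r + m)
      omega

/-- running minimum -/
def M : ℕ → ℤ
  | 0 => 0
  | (t + 1) => min (M t) (s y (t + 1))

lemma M_le {m t : ℕ} (h : m ≤ t) : M y t ≤ s y m := by
  induction t with
  | zero =>
      have : m = 0 := by omega
      subst this; simp [M, s]
  | succ t ih =>
      rcases Nat.lt_or_ge m (t + 1) with h' | h'
      · exact le_trans (min_le_left _ _) (ih (by omega))
      · have : m = t + 1 := by omega
        subst this; exact min_le_right _ _
lemma M_mem (t : ℕ) : ∃ m ≤ t, M y t = s y m := by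
  induction t with
  | zero => exact ⟨0, le_refl 0, by simp [M, s]⟩
  | succ t ih =>
      rcases ih with ⟨m, hm, hM⟩
      rcases min_cases (M y t) (s y (t + 1)) with ⟨h1, _⟩ | ⟨h1, _⟩
      · exact ⟨m, by omega, by rw [M, h1, hM]⟩
      · exact ⟨t + 1, le_refl _, by rw [M, h1]⟩

/-- strict new minimum -/
abbrev SM (t : ℕ) : Prop := ∀ m, m < t → s y t < s y m

lemma SM_iff (t : ℕ) : SM y (t + 1) ↔ s y (t + 1) < M y t := by
  constructor
  · intro h
    obtain ⟨m, hm, hM⟩ := M_mem y t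
    rw [hM]; exact h m (by omega)
  · intro h m hm
    exact lt_of_lt_of_le h (M_le y (by omega))

/-- count of strict minima -/
def F (t : ℕ) : ℕ := ((Finset.Ico 1 (t + 1)).filter (fun u => SM y u)).card

lemma M_eq_neg_F (hy1 : ∀ i, -1 ≤ y i) (t : ℕ) : M y t = -(F y t : ℤ) := by
  classical
  induction t with
  | zero => simp [M, F]
  | succ t ih =>
      have hins : Finset.Ico 1 (t + 1 + 1) = insert (t + 1) (Finset.Ico 1 (t + 1)) := by
        rw [Nat.Ico_succ_right_eq_insert_Ico (by omega)]
      have hnotmem : (t + 1) ∉ Finset.Ico 1 (t + 1) := by simp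
      by_cases h : SM y (t + 1)
      · have h1 : s y (t + 1) < M y t := (SM_iff y t).mp h
        have h2 : M y t ≤ s y t := M_le y (le_refl t)
        have h3 : s y (t + 1) = s y t + y t := s_succ y t
        have h4 := hy1 t
        have h5 : s y (t + 1) = M y t - 1 := by omega
        have hF : F y (t + 1) = F y t + 1 := by
          unfold F
          rw [hins, Finset.filter_insert, if_pos h,
            Finset.card_insert_of_notMem (fun hc => hnotmem (Finset.mem_of_mem_filter _ hc))]
        rw [hF]
        have : M y (t + 1) = M y t - 1 := by rw [M]; omega
        rw [this, ih]; push_cast; ring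
      · have h1 : ¬ s y (t + 1) < M y t := fun hc => h ((SM_iff y t).mpr hc)
        have hF : F y (t + 1) = F y t := by
          unfold F
          rw [hins, Finset.filter_insert, if_neg h]
        rw [hF, ← ih]
        rw [M]; omega

end Kemp

namespace Kemp
open Finset

lemma count_SM (y : ℕ → ℤ) (n j : ℕ) (hj : 1 ≤ j) (hjn : j ≤ n)
    (hy1 : ∀ i, -1 ≤ y i) (hper : ∀ i, y (i + n) = y i)
    (hsum : ∑ i ∈ Finset.range n, y i = -(j : ℤ)) :
    (((Finset.Ico n (2*n)).filter (fun u => SM y u)).card : ℤ) = j := by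
  classical
  have hn : 1 ≤ n := le_trans hj hjn
  have hunion : Finset.Ico 1 n ∪ Finset.Ico n (2*n) = Finset.Ico 1 (2*n) :=
    Finset.Ico_union_Ico_eq_Ico hn (by omega)
  have hdisj : Disjoint (Finset.Ico 1 n) (Finset.Ico n (2*n)) :=
    Finset.Ico_disjoint_Ico_consecutive 1 n (2*n)
  have hcard : F y (2*n-1) = F y (n-1) + ((Finset.Ico n (2*n)).filter (fun u => SM y u)).card := by
    unfold F
    rw [show n - 1 + 1 = n by omega, show 2*n - 1 + 1 = 2*n by omega, ← hunion,
      Finset.filter_union,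
      Finset.card_union_of_disjoint
        (hdisj.mono (Finset.filter_subset _ _) (Finset.filter_subset _ _))]
  have hwin := window y n j hper hsum
  have hM2 : M y (2*n-1) = M y (n-1) - j := by
    apply le_antisymm
    · obtain ⟨m, hm, hMm⟩ := M_mem y (n-1)
      have h1 : M y (2*n-1) ≤ s y (m + n) := M_le y (by omega)
      have h2 := hwin m
      omega
    · obtain ⟨m, hm, hMm⟩ := M_mem y (2*n-1)
      rw [hMm]
      rcases Nat.lt_or_ge m n with h' | h'
      · have h1 := M_le y (show m ≤ n-1 by omega)
        have hj0 : (1:ℤ) ≤ (j:ℤ) := by exact_mod_cast hj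
        omega
      · have h2 := hwin (m - n)
        rw [show m - n + n = m by omega] at h2
        have h3 := M_le y (show m - n ≤ n-1 by omega)
        omega
  have e1 := M_eq_neg_F y hy1 (2*n-1)
  have e2 := M_eq_neg_F y hy1 (n-1)
  have e3 : (F y (2*n-1) : ℤ)
      = (F y (n-1) : ℤ) + (((Finset.Ico n (2*n)).filter (fun u => SM y u)).card : ℤ) := by
    exact_mod_cast hcard
  omega

lemma good_iff (y : ℕ → ℤ) (n j : ℕ) (hj : 1 ≤ j)
    (hy1 : ∀ i, -1 ≤ y i) (hper : ∀ i, y (i + n) = y i)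
    (hsum : ∑ i ∈ Finset.range n, y i = -(j : ℤ)) (r : ℕ) (hr : r < n) :
    (∀ m, m < n → (∑ i ∈ Finset.range m, y (r + i)) ≠ -(j:ℤ)) ↔ SM y (r + n) := by
  have hwin := window y n j hper hsum
  constructor
  · intro h m hm
    have hgt : ∀ m', m' < n → s y (r + m') > s y r - j := by
      intro m' hm'
      have hh : ∀ m'', m'' < n → s y (r + m'') - s y r ≠ -(j:ℤ) := by
        intro m'' hm'' hc
        have := s_add y r m''
        exact h m'' hm'' (by omega)
      have := gt_of_ne y n j hj hy1 r hh m' hm'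
      omega
    rcases Nat.lt_or_ge m r with h' | h'
    · have h1 := hwin m
      have h2 : s y (m + n) > s y r - j := by
        have := hgt (m + n - r) (by omega)
        rw [show r + (m + n - r) = m + n by omega] at this; exact this
      have h3 := hwin r
      omega
    · have h1 := hgt (m - r) (by omega)
      rw [show r + (m - r) = m by omega] at h1
      have h3 := hwin r
      omega
  · intro h m hm hc
    have h1 : s y (r + m) = s y r + ∑ i ∈ Finset.range m, y (r + i) := s_add y r m
    have h2 := h (r + m) (by omega)
    have h3 := hwin r
    omega

theorem cycle_count (y : ℕ → ℤ) (n j : ℕ) (hj : 1 ≤ j) (hjn : j ≤ n)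
    (hy1 : ∀ i, -1 ≤ y i) (hper : ∀ i, y (i + n) = y i)
    (hsum : ∑ i ∈ Finset.range n, y i = -(j : ℤ)) :
    (((Finset.range n).filter
      (fun r => ∀ m, m < n → (∑ i ∈ Finset.range m, y (r + i)) ≠ -(j : ℤ))).card : ℤ) = j := by
  classical
  have h1 : (Finset.range n).filter
        (fun r => ∀ m, m < n → (∑ i ∈ Finset.range m, y (r+i)) ≠ -(j:ℤ))
      = (Finset.range n).filter (fun r => SM y (r + n)) := by
    apply Finset.filter_congr
    intro r hr
    simp only [Finset.mem_range] at hr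
    exact good_iff y n j hj hy1 hper hsum r hr
  rw [h1]
  have h2 : ((Finset.range n).filter (fun r => SM y (r+n))).card
      = ((Finset.Ico n (2*n)).filter (fun u => SM y u)).card := by
    apply Finset.card_bij (fun r _ => r + n)
    · intro a ha
      simp only [Finset.mem_filter, Finset.mem_range] at ha
      simp only [Finset.mem_filter, Finset.mem_Ico]
      exact ⟨⟨by omega, by omega⟩, ha.2⟩
    · intro a ha b hb hab
      omega
    · intro b hb
      simp only [Finset.mem_filter, Finset.mem_Ico] at hb
      refine ⟨b - n, ?_, by omega⟩
      simp only [Finset.mem_filter, Finset.mem_range]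
      constructor
      · omega
      · rw [show b - n + n = b by omega]; exact hb.2
  rw [h2]
  exact count_SM y n j hj hjn hy1 hper hsum

end Kemp


open MeasureTheory ProbabilityTheory

namespace Kemp

lemma window_const (y : ℕ → ℤ) (n : ℕ) (hper : ∀ i, y (i + n) = y i) (r : ℕ) :
    ∑ i ∈ Finset.range n, y (r + i) = ∑ i ∈ Finset.range n, y i := by
  induction r with
  | zero => simp
  | succ r ih =>
      have h1 : ∑ i ∈ Finset.range (n + 1), y (r + i)
          = (∑ i ∈ Finset.range n, y (r + (i + 1))) + y (r + 0) :=
        Finset.sum_range_succ' _ n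
      have h2 : ∑ i ∈ Finset.range (n + 1), y (r + i)
          = (∑ i ∈ Finset.range n, y (r + i)) + y (r + n) :=
        Finset.sum_range_succ _ n
      simp only [Nat.add_zero] at h1
      have h3 : y (r + n) = y r := hper r
      have h4 : ∑ i ∈ Finset.range n, y (r + 1 + i) = ∑ i ∈ Finset.range n, y (r + (i + 1)) :=
        Finset.sum_congr rfl fun i _ => by rw [show r + 1 + i = r + (i + 1) by omega]
      omega

lemma map_eq_pi {Ω : Type*} [MeasurableSpace Ω] (P : Measure Ω) [IsProbabilityMeasure P]
    (ν : Measure ℤ) [IsProbabilityMeasure ν]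
    (ξ : ℕ → Ω → ℤ) (hmeas : ∀ i, Measurable (ξ i))
    (hindep : iIndepFun ξ P)
    (hdist : ∀ i, Measure.map (ξ i) P = ν) (n : ℕ) :
    Measure.map (fun ω (i : Fin n) => ξ i ω) P = Measure.pi (fun _ : Fin n => ν) := by
  classical
  have hX : Measurable (fun ω (i : Fin n) => ξ i ω) := measurable_pi_lambda _ fun i => hmeas i
  apply Measure.ext_of_singleton
  intro x
  rw [Measure.map_apply hX (MeasurableSet.singleton x)]
  set sets : ℕ → Set ℤ := fun i => if h : i < n then {x ⟨i, h⟩} else Set.univ with hsets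
  have hmsets : ∀ i, MeasurableSet (sets i) := by
    intro i; by_cases h : i < n <;> simp [hsets, h]
  have hpre : (fun ω (i : Fin n) => ξ i ω) ⁻¹' {x} = ⋂ i ∈ Finset.range n, ξ i ⁻¹' sets i := by
    ext ω
    simp only [Set.mem_preimage, Set.mem_singleton_iff, funext_iff, Set.mem_iInter,
      Finset.mem_range]
    constructor
    · intro h i hi
      simp only [hsets, dif_pos hi, Set.mem_preimage, Set.mem_singleton_iff]
      exact h ⟨i, hi⟩
    · intro h i
      have := h i.1 i.2
      simp only [hsets, dif_pos i.2, Set.mem_preimage, Set.mem_singleton_iff] at this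
      simpa using this
  rw [hpre, hindep.measure_inter_preimage_eq_mul (Finset.range n) (fun i _ => hmsets i)]
  have hfac : ∀ i ∈ Finset.range n, P (ξ i ⁻¹' sets i) = ν (sets i) := by
    intro i _
    rw [← hdist i, Measure.map_apply (hmeas i) (hmsets i)]
  rw [Finset.prod_congr rfl hfac, ← Set.univ_pi_singleton, Measure.pi_pi,
    ← Fin.prod_univ_eq_prod_range (fun i => ν (sets i)) n]
  apply Finset.prod_congr rfl
  intro i _
  simp [hsets, i.2]

lemma rot_pres (ν : Measure ℤ) [IsProbabilityMeasure ν] (n : ℕ) [NeZero n] (c : Fin n) :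
    Measure.map (fun (x : Fin n → ℤ) i => x (i + c)) (Measure.pi fun _ => ν)
      = Measure.pi fun _ => ν := by
  apply Measure.ext_of_singleton
  intro x
  have hm : Measurable (fun (x : Fin n → ℤ) i => x (i + c)) := measurable_of_countable _
  rw [Measure.map_apply hm (MeasurableSet.singleton x)]
  have hpre : (fun (z : Fin n → ℤ) i => z (i + c)) ⁻¹' {x} = {fun i => x (i - c)} := by
    ext z
    simp only [Set.mem_preimage, Set.mem_singleton_iff, funext_iff]
    constructor
    · intro h i
      have := h (i - c)
      rwa [sub_add_cancel] at this
    · intro h i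
      rw [h (i + c), add_sub_cancel_right]
  rw [hpre, ← Set.univ_pi_singleton, ← Set.univ_pi_singleton, Measure.pi_pi, Measure.pi_pi]
  exact Fintype.prod_equiv (Equiv.subRight c) _ _ (fun i => rfl)

end Kemp

/-- Kemperman's formula: if (W_n) is a random walk on ℤ started at 0 whose i.i.d.
jump distribution ν is supported on {-1,0,1,2,…}, and ζ_j is the first hitting time
of -j, then for all 1 ≤ j ≤ n, P[ζ_j = n] = (j/n) · P[W_n = -j]. -/
theorem stmt2 {Ω : Type*} [MeasurableSpace Ω] (P : Measure Ω) [IsProbabilityMeasure P]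
    (ν : Measure ℤ) [IsProbabilityMeasure ν]
    (hν : ∀ k : ℤ, k ≤ -2 → ν {k} = 0)
    (ξ : ℕ → Ω → ℤ) (hmeas : ∀ i, Measurable (ξ i))
    (hindep : iIndepFun ξ P)
    (hdist : ∀ i, Measure.map (ξ i) P = ν)
    (W : ℕ → Ω → ℤ) (hW : ∀ n ω, W n ω = ∑ i ∈ Finset.range n, ξ i ω)
    (ζ : ℕ → Ω → ℕ) (hζ : ∀ j ω, ζ j ω = sInf {m : ℕ | W m ω = -(j : ℤ)})
    (j n : ℕ) (hj : 1 ≤ j) (hjn : j ≤ n) :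
    (P {ω | ζ j ω = n}).toReal = (j : ℝ) / n * (P {ω | W n ω = -(j : ℤ)}).toReal := by
  classical
  have hn : 0 < n := lt_of_lt_of_le hj hjn
  haveI : NeZero n := ⟨hn.ne'⟩
  set μ : Measure (Fin n → ℤ) := Measure.pi (fun _ => ν) with hμdef
  have hms : ∀ s : Set (Fin n → ℤ), MeasurableSet s := fun s => (Set.to_countable s).measurableSet
  set X : Ω → Fin n → ℤ := fun ω i => ξ i ω with hXdef
  have hXm : Measurable X := measurable_pi_lambda _ fun i => hmeas i
  have hmap : Measure.map X P = μ := Kemp.map_eq_pi P ν ξ hmeas hindep hdist n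
  -- the periodic increment sequence of a configuration
  set Y : (Fin n → ℤ) → ℕ → ℤ := fun x i => x ⟨i % n, Nat.mod_lt i hn⟩ with hYdef
  have hper : ∀ x i, Y x (i + n) = Y x i := by
    intro x i; simp [hYdef, Nat.add_mod_right]
  -- rotations
  set R : ℕ → (Fin n → ℤ) → (Fin n → ℤ) := fun r x i => x (i + (open Fin.NatCast in (r : Fin n))) with hRdef
  have hYrot : ∀ r x i, Y (R r x) i = Y x (r + i) := by
    intro r x i
    simp only [hYdef, hRdef]
    congr 1
    apply Fin.ext
    simp only [Fin.add_def, Fin.val_natCast]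
    rw [Nat.add_mod r i n]
    rw [Nat.add_comm (i % n) (r % n)]
  -- the target sets
  set A : Set (Fin n → ℤ) := {x | (∑ i ∈ Finset.range n, Y x i = -(j : ℤ)) ∧
      ∀ m, m < n → (∑ i ∈ Finset.range m, Y x i) ≠ -(j : ℤ)} with hAdef
  set B : Set (Fin n → ℤ) := {x | ∑ i ∈ Finset.range n, Y x i = -(j : ℤ)} with hBdef
  -- express the walk through X
  have hWX : ∀ ω m, m ≤ n → W m ω = ∑ i ∈ Finset.range m, Y (X ω) i := by
    intro ω m hm
    rw [hW]
    apply Finset.sum_congr rfl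
    intro i hi
    simp only [Finset.mem_range] at hi
    simp [hYdef, hXdef, Nat.mod_eq_of_lt (show i < n by omega)]
  have hE2 : {ω | W n ω = -(j : ℤ)} = X ⁻¹' B := by
    ext ω
    simp only [Set.mem_setOf_eq, Set.mem_preimage, hBdef, hWX ω n le_rfl]
  have hE1 : {ω | ζ j ω = n} = X ⁻¹' A := by
    ext ω
    simp only [Set.mem_setOf_eq, Set.mem_preimage, hAdef, hζ]
    constructor
    · intro h
      have hne : {m : ℕ | W m ω = -(j : ℤ)}.Nonempty := by
        by_contra hemp
        rw [Set.not_nonempty_iff_eq_empty] at hemp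
        rw [hemp, Nat.sInf_empty] at h
        omega
      have hmem : W n ω = -(j : ℤ) := by
        have := Nat.sInf_mem hne
        rw [h] at this
        exact this
      refine ⟨by rw [← hWX ω n le_rfl]; exact hmem, ?_⟩
      intro m hm hc
      have h1 : W m ω = -(j : ℤ) := by rw [hWX ω m (le_of_lt hm)]; exact hc
      have h2 : sInf {m : ℕ | W m ω = -(j : ℤ)} ≤ m := Nat.sInf_le h1
      omega
    · rintro ⟨h1, h2⟩
      have hWn : W n ω = -(j : ℤ) := by rw [hWX ω n le_rfl]; exact h1
      apply le_antisymm
      · exact Nat.sInf_le hWn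
      · by_contra hlt
        push_neg at hlt
        have hmem := Nat.sInf_mem (⟨n, hWn⟩ : {m : ℕ | W m ω = -(j : ℤ)}.Nonempty)
        set m := sInf {m : ℕ | W m ω = -(j : ℤ)} with hmdef
        exact h2 m (by omega) (by rw [← hWX ω m (by omega)]; exact hmem)
  -- the positivity set
  set C : Set (Fin n → ℤ) := {x | ∀ i : Fin n, -1 ≤ x i} with hCdef
  have hC : μ Cᶜ = 0 := by
    have hνneg : ν {z : ℤ | z ≤ -2} = 0 := by
      have he : {z : ℤ | z ≤ -2} = ⋃ k ∈ {z : ℤ | z ≤ -2}, {k} := (Set.biUnion_of_singleton _).symm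
      rw [he]
      exact (measure_biUnion_null_iff (Set.to_countable _)).2 fun k hk => hν k hk
    have hsub : Cᶜ ⊆ ⋃ i : Fin n, Function.eval i ⁻¹' {z : ℤ | z ≤ -2} := by
      intro x hx
      simp only [hCdef, Set.mem_compl_iff, Set.mem_setOf_eq, not_forall, not_le] at hx
      obtain ⟨i, hi⟩ := hx
      refine Set.mem_iUnion.2 ⟨i, ?_⟩
      simp only [Set.mem_preimage, Function.eval, Set.mem_setOf_eq]
      omega
    apply measure_mono_null hsub
    apply measure_iUnion_null
    intro i
    exact Measure.pi_eval_preimage_null (fun _ : Fin n => ν) hνneg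
  -- pointwise cycle-lemma identity
  have hpt : ∀ x, (∑ r ∈ Finset.range n,
        ((R r ⁻¹' A ∩ C).indicator (1 : (Fin n → ℤ) → ℝ≥0∞)) x)
      = (j : ℝ≥0∞) * (B ∩ C).indicator (1 : (Fin n → ℤ) → ℝ≥0∞) x := by
    intro x
    simp only [Set.indicator_apply, Set.mem_inter_iff, Set.mem_preimage, Pi.one_apply]
    by_cases hxC : x ∈ C
    · have hy1 : ∀ i, -1 ≤ Y x i := fun i => hxC _
      have hYs : ∀ r m, ∑ i ∈ Finset.range m, Y (R r x) i = ∑ i ∈ Finset.range m, Y x (r + i) :=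
        fun r m => Finset.sum_congr rfl fun i _ => hYrot r x i
      by_cases hxB : x ∈ B
      · have hsum : ∑ i ∈ Finset.range n, Y x i = -(j : ℤ) := hxB
        have hiff : ∀ r, (R r x ∈ A) ↔
            (∀ m, m < n → (∑ i ∈ Finset.range m, Y x (r + i)) ≠ -(j : ℤ)) := by
          intro r
          have hwin := Kemp.window (Y x) n j (hper x) hsum r
          have hsadd := Kemp.s_add (Y x) r n
          constructor
          · intro hA' m hm hc
            exact hA'.2 m hm (by rw [hYs r m]; exact hc)
          · intro h
            refine ⟨?_, fun m hm hc => h m hm (by rw [← hYs r m]; exact hc)⟩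
            rw [hYs r n]
            have : Kemp.s (Y x) (r + n) = Kemp.s (Y x) r - j := hwin
            omega
        have hcount := Kemp.cycle_count (Y x) n j hj hjn hy1 (hper x) hsum
        calc (∑ r ∈ Finset.range n, if R r x ∈ A ∧ x ∈ C then (1 : ℝ≥0∞) else 0)
            = ∑ r ∈ Finset.range n,
                (if (∀ m, m < n → (∑ i ∈ Finset.range m, Y x (r + i)) ≠ -(j : ℤ))
                  then (1 : ℝ≥0∞) else 0) := by
              refine Finset.sum_congr rfl fun r hr => ?_
              congr 1
              simp [hiff r, hxC]
          _ = (((Finset.range n).filter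
                (fun r => ∀ m, m < n → (∑ i ∈ Finset.range m, Y x (r + i)) ≠ -(j : ℤ))).card
                : ℝ≥0∞) := Finset.sum_boole _ _
          _ = (j : ℝ≥0∞) * 1 := by
              have : ((Finset.range n).filter
                  (fun r => ∀ m, m < n → (∑ i ∈ Finset.range m, Y x (r + i)) ≠ -(j : ℤ))).card
                  = j := by exact_mod_cast hcount
              rw [this, mul_one]
          _ = (j : ℝ≥0∞) * (if x ∈ B ∧ x ∈ C then 1 else 0) := by
              rw [if_pos ⟨hxB, hxC⟩]
      · have hnotA : ∀ r, R r x ∉ A := by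
          intro r hrA
          apply hxB
          have h1 : ∑ i ∈ Finset.range n, Y (R r x) i = -(j : ℤ) := hrA.1
          rw [hYs r n, Kemp.window_const (Y x) n (hper x) r] at h1
          exact h1
        simp [hnotA, hxB]
    · simp [hxC]
  -- the key identity
  have hrot : ∀ r : ℕ, μ (R r ⁻¹' A) = μ A := by
    intro r
    conv_rhs => rw [hμdef, ← Kemp.rot_pres ν n (open Fin.NatCast in (r : Fin n))]
    rw [Measure.map_apply (measurable_of_countable _) (hms A), hμdef, hRdef]
  have key : (n : ℝ≥0∞) * μ A = (j : ℝ≥0∞) * μ B := by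
    calc (n : ℝ≥0∞) * μ A
        = ∑ _r ∈ Finset.range n, μ A := by
          rw [Finset.sum_const, Finset.card_range, nsmul_eq_mul]
      _ = ∑ r ∈ Finset.range n, μ (R r ⁻¹' A) := by
          exact Finset.sum_congr rfl fun r _ => (hrot r).symm
      _ = ∑ r ∈ Finset.range n, μ (R r ⁻¹' A ∩ C) := by
          exact Finset.sum_congr rfl fun r _ => (measure_inter_conull hC).symm
      _ = ∑ r ∈ Finset.range n, ∫⁻ x, (R r ⁻¹' A ∩ C).indicator 1 x ∂μ := by
          exact Finset.sum_congr rfl fun r _ => (lintegral_indicator_one (hms _)).symm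
      _ = ∫⁻ x, ∑ r ∈ Finset.range n, (R r ⁻¹' A ∩ C).indicator 1 x ∂μ :=
          (lintegral_finset_sum _ fun r _ => measurable_of_countable _).symm
      _ = ∫⁻ x, (j : ℝ≥0∞) * (B ∩ C).indicator 1 x ∂μ := by
          congr 1
          funext x
          exact hpt x
      _ = (j : ℝ≥0∞) * ∫⁻ x, (B ∩ C).indicator 1 x ∂μ :=
          lintegral_const_mul _ (measurable_of_countable _)
      _ = (j : ℝ≥0∞) * μ (B ∩ C) := by rw [lintegral_indicator_one (hms _)]
      _ = (j : ℝ≥0∞) * μ B := by rw [measure_inter_conull hC]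
  -- put everything together
  have hPA : P {ω | ζ j ω = n} = μ A := by
    rw [hE1, ← Measure.map_apply hXm (hms A), hmap]
  have hPB : P {ω | W n ω = -(j : ℤ)} = μ B := by
    rw [hE2, ← Measure.map_apply hXm (hms B), hmap]
  rw [hPA, hPB]
  have hfin : μ A ≠ ⊤ := measure_ne_top μ A
  have hfinB : μ B ≠ ⊤ := measure_ne_top μ B
  have hre := congrArg ENNReal.toReal key
  rw [ENNReal.toReal_mul, ENNReal.toReal_mul, ENNReal.toReal_natCast, ENNReal.toReal_natCast]
    at hre
  have hn0 : (n : ℝ) ≠ 0 := by positivity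
  rw [div_mul_eq_mul_div, eq_div_iff hn0]
  linarith
end

section
/- Let (a_n)_{n≥1} be an increasing sequence of positive reals such that a_{kn}/a_n → k^{1/θ} as n → ∞ for every positive integer k, where θ ∈ (1,2]. Then there exists a slowly varying function l : ℝ₊ → ℝ₊ such that a_n = n^{1/θ} l(n) for every positive integer n. -/
open Filter

/-- A positive measurable function is slowly varying if it is eventually positive
and l(tx)/l(x) → 1 as x → ∞ for all t > 0. -/
def SlowlyVarying (l : ℝ → ℝ) : Prop :=
  (∀ᶠ x in atTop, 0 < l x) ∧
    ∀ t : ℝ, 0 < t → Tendsto (fun x => l (t * x) / l x) atTop (nhds 1)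

section AuxDeHaan

variable {θ : ℝ} {a : ℕ → ℝ}

/-- From the integer-ratio limits and monotonicity, consecutive ratios tend to 1. -/
lemma aux_succ_deHaan (hpos : ∀ n : ℕ, 1 ≤ n → 0 < a n) (hmono : Monotone a)
    (hlim : ∀ k : ℕ, 1 ≤ k →
      Tendsto (fun n => a (k * n) / a n) atTop (nhds ((k : ℝ) ^ (1 / θ)))) :
    Tendsto (fun n => a (n + 1) / a n) atTop (nhds 1) := by
  rw [Metric.tendsto_atTop]
  intro ε hε
  -- choose k with (1+1/k)^(1/θ) < 1 + ε
  have hcont : Tendsto (fun k : ℕ => (1 + 1 / (k : ℝ)) ^ (1 / θ)) atTop (nhds 1) := by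
    have h1 : Tendsto (fun k : ℕ => 1 + 1 / (k : ℝ)) atTop (nhds 1) := by
      simpa using (tendsto_const_nhds (x := (1:ℝ))).add tendsto_one_div_atTop_nhds_zero_nat
    have h2 : ContinuousAt (fun s : ℝ => s ^ (1 / θ)) 1 :=
      Real.continuousAt_rpow_const 1 (1 / θ) (Or.inl one_ne_zero)
    simpa only [Real.one_rpow, Function.comp_def] using h2.tendsto.comp h1
  obtain ⟨k, hkε, hk1⟩ := ((hcont.eventually (eventually_lt_nhds
    (by linarith : (1:ℝ) < 1 + ε))).and (eventually_ge_atTop 1)).exists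
  have hkR : (0:ℝ) < k := by exact_mod_cast hk1
  -- the ratio a((k+1)m)/a(km) tends to (1+1/k)^(1/θ)
  have hb : Tendsto (fun m => a ((k + 1) * m) / a (k * m)) atTop
      (nhds ((1 + 1 / (k : ℝ)) ^ (1 / θ))) := by
    have h1 := hlim (k + 1) (by omega)
    have h2 := hlim k hk1
    have hkpow : ((k : ℝ)) ^ (1 / θ) ≠ 0 := (Real.rpow_pos_of_pos hkR _).ne'
    have hdiv := h1.div h2 hkpow
    have heq : ((k + 1 : ℕ) : ℝ) ^ (1 / θ) / (k : ℝ) ^ (1 / θ)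
        = (1 + 1 / (k : ℝ)) ^ (1 / θ) := by
      rw [← Real.div_rpow (by positivity) hkR.le]
      congr 1
      push_cast
      field_simp
    rw [heq] at hdiv
    refine Tendsto.congr' ?_ hdiv
    filter_upwards [eventually_ge_atTop 1] with m hm
    have hm1 : (0:ℝ) < a m := hpos m hm
    have hkm : (0:ℝ) < a (k * m) := hpos _ (by nlinarith [hk1, hm])
    simp only [Pi.div_apply]
    field_simp
  obtain ⟨M, hM⟩ := Metric.tendsto_atTop.mp hb ((1 + ε) - (1 + 1 / (k : ℝ)) ^ (1 / θ))
    (by linarith)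
  refine ⟨k * (max M k) + k + 1, fun n hn => ?_⟩
  set m := n / k with hm_def
  have hcomm : (max M k) * k = k * (max M k) := Nat.mul_comm _ _
  have hmge : max M k ≤ m := by
    rw [hm_def, Nat.le_div_iff_mul_le (by omega)]
    omega
  have hmM : M ≤ m := le_trans (le_max_left _ _) hmge
  have hmk : k ≤ m := le_trans (le_max_right _ _) hmge
  have hm1 : 1 ≤ m := le_trans hk1 hmk
  have hdm : k * m + n % k = n := by rw [hm_def]; exact Nat.div_add_mod n k
  have hmod : n % k < k := Nat.mod_lt n (by omega)
  have hkm_le : k * m ≤ n := by omega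
  have hexp1 : k * (m + 1) = k * m + k := by ring
  have hexp2 : (k + 1) * m = k * m + m := by ring
  have hn_lt : n < k * (m + 1) := by omega
  have hstep : n + 1 ≤ (k + 1) * m := by omega
  have hpos_km : 0 < a (k * m) := hpos _ (by nlinarith)
  have hpos_n : 0 < a n := hpos _ (by omega)
  have hposA : 0 < a ((k + 1) * m) := lt_of_lt_of_le hpos_km (hmono (by omega))
  have hub : a (n + 1) / a n ≤ a ((k + 1) * m) / a (k * m) :=
    div_le_div₀ hposA.le (hmono hstep) hpos_km (hmono hkm_le)
  have h1 : 1 ≤ a (n + 1) / a n := (one_le_div hpos_n).mpr (hmono (Nat.le_succ n))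
  have h2 : a ((k + 1) * m) / a (k * m) < 1 + ε := by
    have hd := hM m hmM
    rw [Real.dist_eq] at hd
    have := abs_lt.mp hd
    linarith [this.2]
  rw [Real.dist_eq, abs_of_nonneg (by linarith)]
  linarith [hub.trans_lt h2]

/-- The integer-ratio limits hold along a real variable as well. -/
lemma aux_int_deHaan (hpos : ∀ n : ℕ, 1 ≤ n → 0 < a n) (hmono : Monotone a)
    (hlim : ∀ k : ℕ, 1 ≤ k →
      Tendsto (fun n => a (k * n) / a n) atTop (nhds ((k : ℝ) ^ (1 / θ))))
    (hsucc : Tendsto (fun n => a (n + 1) / a n) atTop (nhds 1))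
    (k : ℕ) (hk : 1 ≤ k) :
    Tendsto (fun x : ℝ => a ⌊(k : ℝ) * x⌋₊ / a ⌊x⌋₊) atTop (nhds ((k : ℝ) ^ (1 / θ))) := by
  have hlow : Tendsto (fun x : ℝ => a (k * ⌊x⌋₊) / a ⌊x⌋₊) atTop (nhds ((k:ℝ) ^ (1 / θ))) :=
    (hlim k hk).comp tendsto_nat_floor_atTop
  have hhigh0 : Tendsto (fun n : ℕ => a (k * n + k) / a n) atTop (nhds ((k:ℝ) ^ (1 / θ))) := by
    have h1 : Tendsto (fun n : ℕ => a (k * (n + 1)) / a (n + 1)) atTop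
        (nhds ((k:ℝ) ^ (1 / θ))) := (hlim k hk).comp (tendsto_add_atTop_nat 1)
    have hmul := h1.mul hsucc
    rw [mul_one] at hmul
    refine Tendsto.congr' ?_ hmul
    filter_upwards [eventually_ge_atTop 1] with n hn
    have h2 : a (n + 1) ≠ 0 := (hpos _ (by omega)).ne'
    have h3 : k * (n + 1) = k * n + k := by ring
    rw [h3, div_mul_div_comm, mul_comm (a (n + 1)) (a n), mul_div_mul_right _ _ h2]
  have hhigh : Tendsto (fun x : ℝ => a (k * ⌊x⌋₊ + k) / a ⌊x⌋₊) atTop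
      (nhds ((k:ℝ) ^ (1 / θ))) := hhigh0.comp tendsto_nat_floor_atTop
  refine tendsto_of_tendsto_of_tendsto_of_le_of_le' hlow hhigh ?_ ?_
  · filter_upwards [eventually_ge_atTop (1:ℝ)] with x hx
    have hx0 : (0:ℝ) ≤ x := by linarith
    have hfl : 1 ≤ ⌊x⌋₊ := (Nat.one_le_floor_iff x).mpr (by exact_mod_cast hx)
    have hposd : 0 < a ⌊x⌋₊ := hpos _ hfl
    have hle : k * ⌊x⌋₊ ≤ ⌊(k:ℝ) * x⌋₊ := by
      rw [Nat.le_floor_iff (by positivity)]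
      push_cast
      exact mul_le_mul_of_nonneg_left (Nat.floor_le hx0) (by positivity)
    exact div_le_div₀ (hposd.trans_le (hmono ((Nat.le_mul_of_pos_left _ (by omega)).trans hle))).le
      (hmono hle) hposd le_rfl
  · filter_upwards [eventually_ge_atTop (1:ℝ)] with x hx
    have hx0 : (0:ℝ) ≤ x := by linarith
    have hfl : 1 ≤ ⌊x⌋₊ := (Nat.one_le_floor_iff x).mpr (by exact_mod_cast hx)
    have hposd : 0 < a ⌊x⌋₊ := hpos _ hfl
    have hle : ⌊(k:ℝ) * x⌋₊ ≤ k * ⌊x⌋₊ + k := by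
      have h1 : (k:ℝ) * x < ((k * ⌊x⌋₊ + k : ℕ) : ℝ) := by
        push_cast
        have := Nat.lt_floor_add_one x
        nlinarith [hx0, (by exact_mod_cast hk : (1:ℝ) ≤ (k:ℝ))]
      exact le_of_lt (Nat.floor_lt (by positivity) |>.mpr h1)
    exact div_le_div₀ (hposd.trans_le (hmono ((Nat.le_mul_of_pos_left _ (by omega)).trans
      (Nat.le_add_right _ _)))).le (hmono hle) hposd le_rfl

/-- The ratio limits extend to positive rationals. -/
lemma aux_rat_deHaan (hpos : ∀ n : ℕ, 1 ≤ n → 0 < a n)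
    (hint : ∀ k : ℕ, 1 ≤ k →
      Tendsto (fun x : ℝ => a ⌊(k : ℝ) * x⌋₊ / a ⌊x⌋₊) atTop (nhds ((k : ℝ) ^ (1 / θ))))
    (p q : ℕ) (hp : 1 ≤ p) (hq : 1 ≤ q) :
    Tendsto (fun x : ℝ => a ⌊((p : ℝ) / q) * x⌋₊ / a ⌊x⌋₊) atTop
      (nhds (((p : ℝ) / q) ^ (1 / θ))) := by
  have hqR : (0:ℝ) < q := by exact_mod_cast hq
  have hpR : (0:ℝ) < p := by exact_mod_cast hp
  have hdivq : Tendsto (fun x : ℝ => x / (q:ℝ)) atTop atTop :=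
    tendsto_id.atTop_div_const hqR
  have h1 : Tendsto (fun x : ℝ => a ⌊(p:ℝ) * (x / q)⌋₊ / a ⌊x / q⌋₊) atTop
      (nhds ((p:ℝ) ^ (1 / θ))) := (hint p hp).comp hdivq
  have h2 : Tendsto (fun x : ℝ => a ⌊(q:ℝ) * (x / q)⌋₊ / a ⌊x / q⌋₊) atTop
      (nhds ((q:ℝ) ^ (1 / θ))) := (hint q hq).comp hdivq
  have hqpow : ((q:ℝ)) ^ (1 / θ) ≠ 0 := (Real.rpow_pos_of_pos hqR _).ne'
  have hdiv := h1.div h2 hqpow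
  rw [← Real.div_rpow hpR.le hqR.le] at hdiv
  refine Tendsto.congr' ?_ hdiv
  filter_upwards [eventually_ge_atTop ((q:ℝ))] with x hx
  have hx1 : (1:ℝ) ≤ x / q := (one_le_div hqR).mpr hx
  have hxq : (q:ℝ) * (x / q) = x := by field_simp
  have hxp : (p:ℝ) * (x / q) = ((p:ℝ) / q) * x := by field_simp
  have hB : a ⌊x / q⌋₊ ≠ 0 := (hpos _ ((Nat.one_le_floor_iff _).mpr hx1)).ne'
  have hC : a ⌊x⌋₊ ≠ 0 := by
    refine (hpos _ ((Nat.one_le_floor_iff _).mpr ?_)).ne'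
    have : (1:ℝ) ≤ q := by exact_mod_cast hq
    linarith
  show a ⌊(p:ℝ) * (x / q)⌋₊ / a ⌊x / q⌋₊ / (a ⌊(q:ℝ) * (x / q)⌋₊ / a ⌊x / q⌋₊)
      = a ⌊(p:ℝ) / q * x⌋₊ / a ⌊x⌋₊
  rw [hxq, hxp]
  field_simp

/-- A density lemma: ratios of positive naturals are dense in the positive reals. -/
lemma aux_dense_deHaan {L t : ℝ} (hL : 0 ≤ L) (hLt : L < t) :
    ∃ p q : ℕ, 1 ≤ p ∧ 1 ≤ q ∧ L < (p : ℝ) / q ∧ (p : ℝ) / q < t := by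
  obtain ⟨r, hr1, hr2⟩ := exists_rat_btwn hLt
  have hr0 : (0:ℚ) < r := by
    have : (0:ℝ) < (r:ℝ) := lt_of_le_of_lt hL hr1
    exact_mod_cast this
  have hcast : ((r.num.toNat : ℕ) : ℝ) / (r.den : ℝ) = (r : ℝ) := by
    rw [Rat.cast_def]
    congr 1
    exact_mod_cast Int.toNat_of_nonneg (Rat.num_pos.mpr hr0).le
  refine ⟨r.num.toNat, r.den, ?_, r.pos, ?_, ?_⟩
  · have := Rat.num_pos.mpr hr0
    omega
  · rw [hcast]; exact hr1
  · rw [hcast]; exact hr2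

/-- The ratio limits extend to all positive reals. -/
lemma aux_real_deHaan (hθ : 0 < θ) (hpos : ∀ n : ℕ, 1 ≤ n → 0 < a n) (hmono : Monotone a)
    (hrat : ∀ p q : ℕ, 1 ≤ p → 1 ≤ q →
      Tendsto (fun x : ℝ => a ⌊((p : ℝ) / q) * x⌋₊ / a ⌊x⌋₊) atTop
        (nhds (((p : ℝ) / q) ^ (1 / θ))))
    (t : ℝ) (ht : 0 < t) :
    Tendsto (fun x : ℝ => a ⌊t * x⌋₊ / a ⌊x⌋₊) atTop (nhds (t ^ (1 / θ))) := by
  have hθ' : (0:ℝ) < 1/θ := by positivity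
  have hrw : ∀ u : ℝ, 0 ≤ u → (u ^ (1/θ)) ^ θ = u := fun u hu => by
    rw [← Real.rpow_mul hu, one_div, inv_mul_cancel₀ hθ.ne', Real.rpow_one]
  have hrw' : ∀ u : ℝ, 0 ≤ u → (u ^ θ) ^ (1/θ) = u := fun u hu => by
    rw [← Real.rpow_mul hu, mul_one_div, div_self hθ.ne', Real.rpow_one]
  rw [tendsto_order]
  constructor
  · intro c hc
    -- find p/q with c < (p/q)^(1/θ) and p/q < t
    obtain ⟨p, q, hp, hq, hs1, hs2⟩ : ∃ p q : ℕ, 1 ≤ p ∧ 1 ≤ q ∧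
        c < ((p:ℝ)/q) ^ (1/θ) ∧ (p:ℝ)/q < t := by
      rcases le_or_gt c 0 with hc0 | hc0
      · obtain ⟨p, q, hp, hq, h1, h2⟩ := aux_dense_deHaan (by positivity : (0:ℝ) ≤ t/2)
          (by linarith : t/2 < t)
        exact ⟨p, q, hp, hq, lt_of_le_of_lt hc0 (Real.rpow_pos_of_pos
          (lt_of_le_of_lt (by positivity) h1) _), h2⟩
      · have hct : c ^ θ < t := by
          have h := Real.rpow_lt_rpow hc0.le hc hθ
          rwa [hrw t ht.le] at h
        obtain ⟨p, q, hp, hq, h1, h2⟩ := aux_dense_deHaan (by positivity : (0:ℝ) ≤ c ^ θ) hct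
        refine ⟨p, q, hp, hq, ?_, h2⟩
        have := Real.rpow_lt_rpow (by positivity : (0:ℝ) ≤ c ^ θ) h1 hθ'
        rwa [hrw' c hc0.le] at this
    have hev := (hrat p q hp hq).eventually (eventually_gt_nhds hs1)
    filter_upwards [hev, eventually_ge_atTop (max 1 ((q:ℝ)/p))] with x hx1 hx2
    have hx1' : (1:ℝ) ≤ x := le_trans (le_max_left _ _) hx2
    have hx0 : (0:ℝ) ≤ x := by linarith
    have hpq0 : (0:ℝ) < (p:ℝ)/q := by positivity
    have hfl1 : 1 ≤ ⌊((p:ℝ)/q) * x⌋₊ := by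
      rw [Nat.one_le_floor_iff]
      rw [max_le_iff] at hx2
      have hq0 : (0:ℝ) < q := by positivity
      have hp0 : (0:ℝ) < p := by positivity
      calc (1:ℝ) = ((p:ℝ)/q) * ((q:ℝ)/p) := by field_simp
        _ ≤ ((p:ℝ)/q) * x := mul_le_mul_of_nonneg_left hx2.2 hpq0.le
    have hmle : ⌊((p:ℝ)/q) * x⌋₊ ≤ ⌊t * x⌋₊ :=
      Nat.floor_le_floor (mul_le_mul_of_nonneg_right hs2.le hx0)
    have hdpos : 0 < a ⌊x⌋₊ := hpos _ ((Nat.one_le_floor_iff _).mpr hx1')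
    calc c < a ⌊((p:ℝ)/q) * x⌋₊ / a ⌊x⌋₊ := hx1
      _ ≤ a ⌊t * x⌋₊ / a ⌊x⌋₊ :=
          div_le_div₀ ((hpos _ hfl1).trans_le (hmono hmle)).le (hmono hmle) hdpos le_rfl
  · intro c hc
    have hc0 : (0:ℝ) < c := lt_trans (Real.rpow_pos_of_pos ht _) hc
    have htc : t < c ^ θ := by
      have h := Real.rpow_lt_rpow (by positivity : (0:ℝ) ≤ t ^ (1/θ)) hc hθ
      rwa [hrw t ht.le] at h
    obtain ⟨p, q, hp, hq, h1, h2⟩ := aux_dense_deHaan ht.le htc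
    have hs1 : ((p:ℝ)/q) ^ (1/θ) < c := by
      have := Real.rpow_lt_rpow (by positivity : (0:ℝ) ≤ (p:ℝ)/q) h2 hθ'
      rwa [hrw' c hc0.le] at this
    have hev := (hrat p q hp hq).eventually (eventually_lt_nhds hs1)
    filter_upwards [hev, eventually_ge_atTop (max 1 (1/t))] with x hx1 hx2
    have hx1' : (1:ℝ) ≤ x := le_trans (le_max_left _ _) hx2
    have hx0 : (0:ℝ) ≤ x := by linarith
    have hfl1 : 1 ≤ ⌊t * x⌋₊ := by
      rw [Nat.one_le_floor_iff]
      rw [max_le_iff] at hx2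
      calc (1:ℝ) = t * (1/t) := by field_simp
        _ ≤ t * x := mul_le_mul_of_nonneg_left hx2.2 ht.le
    have hmle : ⌊t * x⌋₊ ≤ ⌊((p:ℝ)/q) * x⌋₊ :=
      Nat.floor_le_floor (mul_le_mul_of_nonneg_right h1.le hx0)
    have hdpos : 0 < a ⌊x⌋₊ := hpos _ ((Nat.one_le_floor_iff _).mpr hx1')
    calc a ⌊t * x⌋₊ / a ⌊x⌋₊
        ≤ a ⌊((p:ℝ)/q) * x⌋₊ / a ⌊x⌋₊ :=
          div_le_div₀ ((hpos _ hfl1).trans_le (hmono hmle)).le (hmono hmle) hdpos le_rfl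
      _ < c := hx1

end AuxDeHaan

/-- De Haan's theorem for monotone sequences: if (a_n) is an increasing positive
sequence with a_{kn}/a_n → k^{1/θ} for every positive integer k, θ ∈ (1,2],
then a_n = n^{1/θ} l(n) for some slowly varying l. -/
theorem stmt7 (θ : ℝ) (hθ1 : 1 < θ) (hθ2 : θ ≤ 2) (a : ℕ → ℝ)
    (hpos : ∀ n : ℕ, 1 ≤ n → 0 < a n) (hmono : Monotone a)
    (hlim : ∀ k : ℕ, 1 ≤ k →
      Tendsto (fun n => a (k * n) / a n) atTop (nhds ((k : ℝ) ^ (1 / θ)))) :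
    ∃ l : ℝ → ℝ, Measurable l ∧ SlowlyVarying l ∧
      ∀ n : ℕ, 1 ≤ n → a n = (n : ℝ) ^ (1 / θ) * l n := by
  have hθ : (0:ℝ) < θ := by linarith
  have hsucc := aux_succ_deHaan hpos hmono hlim
  have hint := fun k hk => aux_int_deHaan hpos hmono hlim hsucc k hk
  have hrat := fun p q hp hq => aux_rat_deHaan hpos hint p q hp hq
  have hreal := fun t ht => aux_real_deHaan hθ hpos hmono hrat t ht
  set l : ℝ → ℝ := fun x => if x < 1 then 1 else a ⌊x⌋₊ / x ^ (1/θ) with hl_def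
  have hl_eq : ∀ x : ℝ, 1 ≤ x → l x = a ⌊x⌋₊ / x ^ (1/θ) := fun x hx => by
    simp [hl_def, not_lt.mpr hx]
  have hl_pos : ∀ x : ℝ, 1 ≤ x → 0 < l x := fun x hx => by
    rw [hl_eq x hx]
    have h1 : 1 ≤ ⌊x⌋₊ := (Nat.one_le_floor_iff _).mpr hx
    have h2 : (0:ℝ) < x := by linarith
    exact div_pos (hpos _ h1) (Real.rpow_pos_of_pos h2 _)
  refine ⟨l, ?_, ⟨?_, ?_⟩, ?_⟩
  · -- measurability
    refine Measurable.ite (measurableSet_lt measurable_id measurable_const)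
      measurable_const ?_
    exact (measurable_from_top.comp Nat.measurable_floor).div (by measurability)
  · exact (eventually_ge_atTop (1:ℝ)).mono fun x hx => hl_pos x hx
  · intro t ht
    have key := (hreal t ht).div_const (t ^ (1/θ))
    rw [div_self (Real.rpow_pos_of_pos ht _).ne'] at key
    refine Tendsto.congr' ?_ key
    filter_upwards [eventually_ge_atTop (max 1 (1/t))] with x hx
    rw [max_le_iff] at hx
    have hx1 : (1:ℝ) ≤ x := hx.1
    have hx0 : (0:ℝ) < x := by linarith
    have htx : (1:ℝ) ≤ t * x := by
      calc (1:ℝ) = t * (1/t) := by field_simp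
        _ ≤ t * x := mul_le_mul_of_nonneg_left hx.2 ht.le
    rw [hl_eq x hx1, hl_eq _ htx]
    have hrp : (t * x) ^ (1/θ) = t ^ (1/θ) * x ^ (1/θ) := Real.mul_rpow ht.le hx0.le
    have hA : a ⌊x⌋₊ ≠ 0 := (hpos _ ((Nat.one_le_floor_iff _).mpr hx1)).ne'
    have hX : x ^ (1/θ) ≠ 0 := (Real.rpow_pos_of_pos hx0 _).ne'
    have hT : t ^ (1/θ) ≠ 0 := (Real.rpow_pos_of_pos ht _).ne'
    rw [hrp]
    field_simp
  · intro n hn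
    have hn1 : (1:ℝ) ≤ (n:ℝ) := by exact_mod_cast hn
    have hn0 : (0:ℝ) < (n:ℝ) := by linarith
    rw [hl_eq _ hn1, Nat.floor_natCast, mul_div_cancel₀]
    exact (Real.rpow_pos_of_pos hn0 _).ne'
end

section
/- Contour/height comparison: for any plane tree τ with n = ζ(τ) vertices, let b_p = 2p − H_p(τ) for 0 ≤ p < n (the time at which the contour process visits the (p+1)-st vertex) and b_n = 2(n−1). Then C_{b_p}(τ) = H_p(τ), and for every 0 ≤ p < n, sup_{t ∈ [b_p, b_{p+1}]} |C_t(τ) − H_p(τ)| ≤ |H_{p+1}(τ) − H_p(τ)| + 1. -/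
/-- Rooted ordered (plane) trees: a node with an ordered list of subtrees. -/
inductive PTree : Type where
  | node : List PTree → PTree

namespace PTree

/-- Heights (generations) of the vertices of the tree, listed in lexicographical
(depth-first, preorder) order, the root being at height `h`. -/
def heightAux (h : ℕ) : PTree → List ℕ
  | node ts => h :: (ts.attach.map (fun x => heightAux (h + 1) x.1)).flatten
decreasing_by
  have := List.sizeOf_lt_of_mem x.2
  simp only [PTree.node.sizeOf_spec]
  omega

/-- The total progeny ζ(τ): the number of vertices of τ. -/
def progeny (τ : PTree) : ℕ := (heightAux 0 τ).length

/-- The (discrete) height function: H_p(τ) = |u(p)| is the generation of the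
(p+1)-st vertex in lexicographical order (0 for p ≥ ζ(τ)). -/
def H (τ : PTree) (p : ℕ) : ℕ := (heightAux 0 τ).getD p 0

/-- The heights of the particle performing the contour (depth-first) traversal of
the tree, at integer times 0, 1, …, 2(ζ(τ)-1), the root being at height `h`. -/
def contourAux (h : ℕ) : PTree → List ℕ
  | node ts => h :: (ts.attach.map (fun x => contourAux (h + 1) x.1 ++ [h])).flatten
decreasing_by
  have := List.sizeOf_lt_of_mem x.2
  simp only [PTree.node.sizeOf_spec]
  omega

/-- The contour function at integer times (0 for times ≥ 2(ζ(τ)-1)). -/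
def cseq (τ : PTree) (k : ℕ) : ℕ := (contourAux 0 τ).getD k 0

/-- The contour function C_t(τ), t ∈ [0, 2(ζ(τ)-1)], extended by linear
interpolation between integer times (and by 0 afterwards). -/
noncomputable def C (τ : PTree) (t : ℝ) : ℝ :=
  (1 - (t - (⌊t⌋₊ : ℝ))) * cseq τ ⌊t⌋₊ + (t - (⌊t⌋₊ : ℝ)) * cseq τ (⌊t⌋₊ + 1)

/-- b_p = 2p − H_p(τ), the time at which the contour particle first visits the
(p+1)-st vertex, with the convention b_{ζ(τ)} = 2(ζ(τ)−1). -/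
noncomputable def b (τ : PTree) (p : ℕ) : ℝ :=
  if p = progeny τ then 2 * ((progeny τ : ℝ) - 1) else 2 * p - H τ p

end PTree

namespace PTree

/-- custom induction principle -/
theorem ptree_ind {P : PTree → Prop}
    (ih : ∀ ts : List PTree, (∀ t ∈ ts, P t) → P (node ts)) : ∀ τ, P τ
  | node ts => ih ts (fun t ht => ptree_ind ih t)
decreasing_by
  have := List.sizeOf_lt_of_mem ht
  simp only [PTree.node.sizeOf_spec]
  omega

theorem heightAux_node (h : ℕ) (ts : List PTree) :
    heightAux h (node ts) = h :: (ts.map (heightAux (h + 1))).flatten := by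
  rw [heightAux, List.attach_map_val]

theorem contourAux_node (h : ℕ) (ts : List PTree) :
    contourAux h (node ts) = h :: (ts.map (fun t => contourAux (h + 1) t ++ [h])).flatten := by
  rw [contourAux, List.attach_map_val (l := ts) (f := fun t => contourAux (h + 1) t ++ [h])]

theorem heightAux_eq_cons (h : ℕ) (τ : PTree) : ∃ l, heightAux h τ = h :: l := by
  cases τ with
  | node ts => exact ⟨_, heightAux_node h ts⟩

theorem heightAux_ne_nil (h : ℕ) (τ : PTree) : heightAux h τ ≠ [] := by
  obtain ⟨l, hl⟩ := heightAux_eq_cons h τ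
  simp [hl]

theorem le_of_mem_heightAux : ∀ (τ : PTree) (h x : ℕ), x ∈ heightAux h τ → h ≤ x := by
  refine ptree_ind ?_
  intro ts ih h x hx
  rw [heightAux_node] at hx
  rcases List.mem_cons.mp hx with rfl | hx
  · exact le_refl x
  · obtain ⟨l, hl, hxl⟩ := List.mem_flatten.mp hx
    obtain ⟨t, ht, rfl⟩ := List.mem_map.mp hl
    exact le_trans (Nat.le_succ h) (ih t ht (h + 1) x hxl)

theorem chain'_of_forall_mem {α : Type*} {R : α → α → Prop} :
    ∀ l : List α, (∀ a ∈ l, ∀ b ∈ l, R a b) → List.Chain' R l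
  | [], _ => List.isChain_nil
  | [a], _ => List.isChain_singleton a
  | a :: b :: l, hR =>
    List.IsChain.cons_cons (hR a (by simp) b (by simp))
      (chain'_of_forall_mem (b :: l) (fun x hx y hy =>
        hR x (List.mem_cons_of_mem _ hx) y (List.mem_cons_of_mem _ hy)))

theorem chain'_heightAux : ∀ (τ : PTree) (h : ℕ),
    List.Chain' (fun a b => b ≤ a + 1) (heightAux h τ) := by
  refine ptree_ind ?_
  intro ts ih h
  rw [heightAux_node, List.Chain', List.isChain_cons]
  constructor
  · intro y hy
    cases ts with
    | nil => simp at hy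
    | cons t ts' =>
      obtain ⟨l, hl⟩ := heightAux_eq_cons (h + 1) t
      simp [hl] at hy
      omega
  · rw [List.isChain_flatten (by simp [heightAux_ne_nil])]
    refine ⟨?_, ?_⟩
    · intro l hl
      obtain ⟨t, ht, rfl⟩ := List.mem_map.mp hl
      exact ih t ht (h + 1)
    · apply chain'_of_forall_mem
      intro l₁ hl₁ l₂ hl₂ x hx y hy
      obtain ⟨t₁, ht₁, rfl⟩ := List.mem_map.mp hl₁
      obtain ⟨t₂, ht₂, rfl⟩ := List.mem_map.mp hl₂
      obtain ⟨l, hl⟩ := heightAux_eq_cons (h + 1) t₂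
      rw [hl] at hy
      simp at hy
      have hx' : h + 1 ≤ x :=
        le_of_mem_heightAux t₁ (h + 1) x (List.mem_of_mem_getLast? hx)
      omega

/-- Descending segment from `a` down to `b - 1` (just `[a]` when `b = a + 1`). -/
def seg (a bb : ℕ) : List ℕ := (List.range (a + 2 - bb)).map (a - ·)

theorem seg_length (a bb : ℕ) : (seg a bb).length = a + 2 - bb := by
  simp [seg]

theorem seg_getD {a bb j : ℕ} (hj : j < a + 2 - bb) : (seg a bb).getD j 0 = a - j := by
  rw [List.getD_eq_getElem _ _ (by simpa [seg_length])]
  simp [seg]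

theorem seg_succ_self (a : ℕ) : seg a (a + 1) = [a] := by
  have : a + 2 - (a + 1) = 1 := by omega
  rw [seg, this, List.range_succ]
  simp

def pairSeg : List ℕ → List ℕ
  | [] => []
  | [_] => []
  | a :: bb :: l => seg a bb ++ pairSeg (bb :: l)

@[simp] theorem pairSeg_nil : pairSeg [] = [] := rfl
@[simp] theorem pairSeg_single (a : ℕ) : pairSeg [a] = [] := rfl
theorem pairSeg_cons₂ (a bb : ℕ) (l : List ℕ) :
    pairSeg (a :: bb :: l) = seg a bb ++ pairSeg (bb :: l) := rfl

theorem pairSeg_append : ∀ (L : List ℕ) (c : ℕ) (M : List ℕ),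
    pairSeg (L ++ c :: M) = pairSeg (L ++ [c]) ++ pairSeg (c :: M)
  | [], c, M => by simp
  | [a], c, M => by simp [pairSeg_cons₂]
  | a :: bb :: L, c, M => by
    have := pairSeg_append (bb :: L) c M
    simp only [List.cons_append] at this ⊢
    rw [pairSeg_cons₂, pairSeg_cons₂, this, List.append_assoc]

theorem seg_succ {a h : ℕ} (hh : h ≤ a) : seg a (h + 1) = seg a (h + 2) ++ [h] := by
  have h1 : a + 2 - (h + 1) = (a - h) + 1 := by omega
  have h2 : a + 2 - (h + 2) = a - h := by omega
  have h3 : a - (a - h) = h := by omega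
  rw [seg, seg, h1, h2, List.range_succ, List.map_append]
  simp [h3]

theorem pairSeg_sentinel {h : ℕ} : ∀ (L : List ℕ), L ≠ [] → (∀ x ∈ L, h + 1 ≤ x) →
    pairSeg (L ++ [h + 1]) = pairSeg (L ++ [h + 2]) ++ [h]
  | [], hne, _ => absurd rfl hne
  | [a], _, hx => by
    have : h + 1 ≤ a := hx a (by simp)
    simp only [List.cons_append, List.nil_append, pairSeg_cons₂, pairSeg_single,
      List.append_nil]
    exact seg_succ (by omega)
  | a :: bb :: L, _, hx => by
    have := pairSeg_sentinel (bb :: L) (by simp) (fun x hxm => hx x (List.mem_cons_of_mem _ hxm))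
    simp only [List.cons_append] at this ⊢
    rw [pairSeg_cons₂, pairSeg_cons₂, this, List.append_assoc]

theorem contour_eq_pairSeg : ∀ (τ : PTree) (h : ℕ),
    contourAux h τ = pairSeg (heightAux h τ ++ [h + 1]) := by
  refine ptree_ind ?_
  intro ts ih h
  have helper : ∀ ls : List PTree, (∀ t ∈ ls, ∀ h', contourAux h' t = pairSeg (heightAux h' t ++ [h' + 1])) →
      pairSeg ((ls.map (heightAux (h + 1))).flatten ++ [h + 1])
        = (ls.map (fun t => contourAux (h + 1) t ++ [h])).flatten := by
    intro ls
    induction ls with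
    | nil => intro _; simp
    | cons t ls ihl =>
      intro hIH
      simp only [List.map_cons, List.flatten_cons]
      have hhead : ∃ M, (ls.map (heightAux (h + 1))).flatten ++ [h + 1] = (h + 1) :: M := by
        cases ls with
        | nil => exact ⟨[], rfl⟩
        | cons t' ls' =>
          obtain ⟨l', hl'⟩ := heightAux_eq_cons (h + 1) t'
          exact ⟨l' ++ ((ls'.map (heightAux (h + 1))).flatten ++ [h + 1]), by simp [hl']⟩
      obtain ⟨M, hM⟩ := hhead
      rw [List.append_assoc, hM, pairSeg_append, ← hM,
        ihl (fun t' ht' h' => hIH t' (List.mem_cons_of_mem _ ht') h'),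
        pairSeg_sentinel _ (heightAux_ne_nil _ _) (fun x hxm => le_of_mem_heightAux t (h + 1) x hxm)]
      have h2 : h + 2 = (h + 1) + 1 := rfl
      rw [h2, ← hIH t List.mem_cons_self (h + 1)]
  rw [contourAux_node, heightAux_node]
  cases ts with
  | nil => simp [pairSeg_cons₂, seg_succ_self]
  | cons t ts' =>
    obtain ⟨l, hl⟩ := heightAux_eq_cons (h + 1) t
    have hflat : ∃ M, ((t :: ts').map (heightAux (h + 1))).flatten ++ [h + 1] = (h + 1) :: M :=
      ⟨l ++ ((ts'.map (heightAux (h + 1))).flatten ++ [h + 1]), by simp [hl]⟩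
    obtain ⟨M, hM⟩ := hflat
    rw [List.cons_append, hM, pairSeg_cons₂, seg_succ_self, ← hM,
      helper (t :: ts') (fun t' ht' h' => ih t' ht' h')]
    rfl

theorem pairSeg_getD : ∀ (p : ℕ) (L : List ℕ), p + 1 < L.length →
    ∀ j, j < L.getD p 0 + 2 - L.getD (p + 1) 0 →
    (pairSeg L).getD ((Finset.range p).sum (fun q => L.getD q 0 + 2 - L.getD (q + 1) 0) + j) 0
      = L.getD p 0 - j
  | 0, [], hlen, _, _ => by simp at hlen
  | 0, [a], hlen, _, _ => by simp at hlen
  | 0, a :: bb :: l, _, j, hj => by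
    simp only [List.getD_cons_zero, List.getD_cons_succ] at hj ⊢
    rw [Finset.range_zero, Finset.sum_empty, zero_add, pairSeg_cons₂,
      List.getD_append _ _ _ _ (by rw [seg_length]; exact hj), seg_getD hj]
  | p + 1, [], hlen, _, _ => by simp at hlen
  | p + 1, [a], hlen, _, _ => by simp at hlen
  | p + 1, a :: bb :: l, hlen, j, hj => by
    have hlen' : p + 1 < (bb :: l).length := by simpa using hlen
    have hrec := pairSeg_getD p (bb :: l) hlen' j (by simpa using hj)
    rw [Finset.sum_range_succ']
    simp only [List.getD_cons_succ, List.getD_cons_zero] at hj ⊢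
    have hsum : ∀ q, (a :: bb :: l).getD (q + 1) 0 + 2 - (a :: bb :: l).getD (q + 1 + 1) 0
        = (bb :: l).getD q 0 + 2 - (bb :: l).getD (q + 1) 0 := by
      intro q; simp
    simp only [List.getD_cons_succ] at hrec
    rw [pairSeg_cons₂]
    rw [List.getD_append_right _ _ _ _ (by rw [seg_length]; omega)]
    rw [seg_length]
    have hidx : ∑ x ∈ Finset.range p, ((bb :: l).getD x 0 + 2 - l.getD x 0) + (a + 2 - bb) + j
        - (a + 2 - bb) = ∑ x ∈ Finset.range p, ((bb :: l).getD x 0 + 2 - l.getD x 0) + j := by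
      omega
    rw [hidx, hrec]

/-- The height list extended by a sentinel `1`. -/
def exth (τ : PTree) : List ℕ := heightAux 0 τ ++ [1]

theorem progeny_pos (τ : PTree) : 1 ≤ progeny τ := by
  rw [progeny]
  obtain ⟨l, hl⟩ := heightAux_eq_cons 0 τ
  simp [hl]

theorem exth_length (τ : PTree) : (exth τ).length = progeny τ + 1 := by
  simp [exth, progeny]

theorem exth_getD_lt {τ : PTree} {p : ℕ} (hp : p < progeny τ) :
    (exth τ).getD p 0 = H τ p := by
  rw [exth, H, List.getD_append _ _ _ _ hp]

theorem exth_getD_self (τ : PTree) : (exth τ).getD (progeny τ) 0 = 1 := by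
  rw [exth, List.getD_append_right _ _ _ _ (by simp [progeny])]
  simp [progeny]

theorem H_zero (τ : PTree) : H τ 0 = 0 := by
  obtain ⟨l, hl⟩ := heightAux_eq_cons 0 τ
  rw [H, hl]
  rfl

theorem H_of_ge {τ : PTree} {p : ℕ} (h : progeny τ ≤ p) : H τ p = 0 :=
  List.getD_eq_default _ _ h

theorem H_pos {τ : PTree} {q : ℕ} (h1 : 1 ≤ q) (h2 : q < progeny τ) : 1 ≤ H τ q := by
  cases τ with
  | node ts =>
    rw [H, heightAux_node]
    rw [progeny, heightAux_node] at h2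
    obtain ⟨q', rfl⟩ : ∃ q', q = q' + 1 := ⟨q - 1, by omega⟩
    rw [List.getD_cons_succ]
    have hq' : q' < ((ts.map (heightAux 1)).flatten).length := by
      simp at h2 ⊢; omega
    rw [List.getD_eq_getElem _ _ hq']
    have hmem := List.getElem_mem hq'
    obtain ⟨l, hl, hxl⟩ := List.mem_flatten.mp hmem
    obtain ⟨t, ht, rfl⟩ := List.mem_map.mp hl
    exact le_of_mem_heightAux t 1 _ hxl

theorem chainH {τ : PTree} {p : ℕ} (h : p + 1 < progeny τ) : H τ (p + 1) ≤ H τ p + 1 := by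
  rw [progeny] at h
  have hc := List.isChain_iff_getElem.mp (chain'_heightAux τ 0) p (by omega)
  rw [H, H, List.getD_eq_getElem _ _ h, List.getD_eq_getElem _ _ (by omega)]
  simpa using hc

theorem cseq_eq (τ : PTree) (k : ℕ) : cseq τ k = (pairSeg (exth τ)).getD k 0 := by
  rw [cseq, contour_eq_pairSeg τ 0, exth]

theorem fpos {τ : PTree} {p : ℕ} (hp : p < progeny τ) :
    1 ≤ (exth τ).getD p 0 + 2 - (exth τ).getD (p + 1) 0 := by
  by_cases hn : p + 1 = progeny τ
  · rw [hn, exth_getD_self]; omega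
  · have h2 : p + 1 < progeny τ := by omega
    rw [exth_getD_lt hp, exth_getD_lt h2]
    have := chainH h2
    omega

theorem H_le_Bsum {τ : PTree} : ∀ p, p < progeny τ → H τ p ≤ p ∧
    (Finset.range p).sum (fun q => (exth τ).getD q 0 + 2 - (exth τ).getD (q + 1) 0) + H τ p
      = 2 * p
  | 0, _ => by simp [H_zero]
  | p + 1, hp => by
    have hp' : p < progeny τ := by omega
    obtain ⟨h1, h2⟩ := H_le_Bsum p hp'
    have hch := chainH hp
    have hf : (exth τ).getD p 0 + 2 - (exth τ).getD (p + 1) 0 = H τ p + 2 - H τ (p + 1) := by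
      rw [exth_getD_lt hp', exth_getD_lt hp]
    rw [Finset.sum_range_succ, hf]
    omega

theorem cseq_desc {τ : PTree} {p j : ℕ} (hp : p < progeny τ)
    (hj : j < (exth τ).getD p 0 + 2 - (exth τ).getD (p + 1) 0) :
    cseq τ (2 * p - H τ p + j) = H τ p - j := by
  obtain ⟨h1, h2⟩ := H_le_Bsum p hp
  have h0 := pairSeg_getD p (exth τ) (by rw [exth_length]; omega) j hj
  have hidx : 2 * p - H τ p + j
      = (Finset.range p).sum (fun q => (exth τ).getD q 0 + 2 - (exth τ).getD (q + 1) 0) + j := by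
    omega
  rw [cseq_eq, hidx, h0, exth_getD_lt hp]

theorem cseq_at {τ : PTree} {p : ℕ} (hp : p < progeny τ) :
    cseq τ (2 * p - H τ p) = H τ p := by
  have := cseq_desc hp (by have := fpos hp; omega : (0 : ℕ) < _)
  simpa using this

theorem cseq_bound {τ : PTree} {p k : ℕ} (hp : p < progeny τ)
    (hk1 : 2 * p - H τ p ≤ k)
    (hk2 : k ≤ if p + 1 = progeny τ then 2 * progeny τ - 2 else 2 * (p + 1) - H τ (p + 1)) :
    |(cseq τ k : ℤ) - (H τ p : ℤ)| ≤ |(H τ (p + 1) : ℤ) - (H τ p : ℤ)| + 1 := by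
  obtain ⟨hHle, _⟩ := H_le_Bsum p hp
  by_cases hn : p + 1 = progeny τ
  · rw [if_pos hn] at hk2
    have hHn : H τ (p + 1) = 0 := H_of_ge (by omega)
    set j := k - (2 * p - H τ p) with hjdef
    have hjlt : j < (exth τ).getD p 0 + 2 - (exth τ).getD (p + 1) 0 := by
      rw [exth_getD_lt hp, hn, exth_getD_self]
      omega
    have hval := cseq_desc hp hjlt
    have hk : 2 * p - H τ p + j = k := by omega
    rw [hk] at hval
    have hjle : j ≤ H τ p := by omega
    rcases abs_cases ((H τ (p + 1) : ℤ) - (H τ p : ℤ)) with h | h <;>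
      rw [h.1, abs_le] <;> constructor <;> omega
  · rw [if_neg hn] at hk2
    have hp1 : p + 1 < progeny τ := by omega
    have hch := chainH hp1
    have hpos : 1 ≤ H τ (p + 1) := H_pos (by omega) hp1
    obtain ⟨hHle1, _⟩ := H_le_Bsum (p + 1) hp1
    rcases eq_or_lt_of_le hk2 with heq | hlt
    · have hval := cseq_at hp1
      rw [← heq] at hval
      rw [hval]
      linarith
    · set j := k - (2 * p - H τ p) with hjdef
      have hjlt : j < (exth τ).getD p 0 + 2 - (exth τ).getD (p + 1) 0 := by
        rw [exth_getD_lt hp, exth_getD_lt hp1]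
        omega
      have hval := cseq_desc hp hjlt
      have hk : 2 * p - H τ p + j = k := by omega
      rw [hk] at hval
      have hjle : j ≤ H τ p + 1 - H τ (p + 1) := by
        rw [exth_getD_lt hp, exth_getD_lt hp1] at hjlt
        omega
      rcases abs_cases ((H τ (p + 1) : ℤ) - (H τ p : ℤ)) with h | h <;>
        rw [h.1, abs_le] <;> constructor <;> omega

theorem cseq_bound_real {τ : PTree} {p k : ℕ} (hp : p < progeny τ)
    (hk1 : 2 * p - H τ p ≤ k)
    (hk2 : k ≤ if p + 1 = progeny τ then 2 * progeny τ - 2 else 2 * (p + 1) - H τ (p + 1)) :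
    |(cseq τ k : ℝ) - (H τ p : ℝ)| ≤ |(H τ (p + 1) : ℝ) - (H τ p : ℝ)| + 1 := by
  exact_mod_cast cseq_bound hp hk1 hk2

theorem C_natCast (τ : PTree) (k : ℕ) : C τ (k : ℝ) = cseq τ k := by
  simp [C, Nat.floor_natCast]

theorem b_eq_lt {τ : PTree} {p : ℕ} (hp : p < progeny τ) :
    b τ p = ((2 * p - H τ p : ℕ) : ℝ) := by
  obtain ⟨h1, _⟩ := H_le_Bsum p hp
  rw [b, if_neg (by omega), Nat.cast_sub (by omega)]
  push_cast
  ring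

theorem b_succ_eq {τ : PTree} {p : ℕ} (hp : p < progeny τ) :
    b τ (p + 1) = ((if p + 1 = progeny τ then 2 * progeny τ - 2
      else 2 * (p + 1) - H τ (p + 1) : ℕ) : ℝ) := by
  by_cases hn : p + 1 = progeny τ
  · rw [b, if_pos hn, if_pos hn]
    have := progeny_pos τ
    rw [Nat.cast_sub (by omega)]
    push_cast
    ring
  · have hp1 : p + 1 < progeny τ := by omega
    obtain ⟨h1, _⟩ := H_le_Bsum (p + 1) hp1
    rw [b, if_neg hn, if_neg hn, Nat.cast_sub (by omega)]
    push_cast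
    ring

end PTree


open PTree in
theorem stmt15' (τ : PTree) (p : ℕ) (hp : p < progeny τ) :
    C τ (b τ p) = H τ p ∧
      ∀ t ∈ Set.Icc (b τ p) (b τ (p + 1)),
        |C τ t - (H τ p : ℝ)| ≤ |(H τ (p + 1) : ℝ) - (H τ p : ℝ)| + 1 := by
  have hb := b_eq_lt hp
  constructor
  · rw [hb, C_natCast, cseq_at hp]
  · intro t ht
    obtain ⟨ht1, ht2⟩ := ht
    rw [b_succ_eq hp] at ht2
    rw [hb] at ht1
    have htnn : (0 : ℝ) ≤ t := le_trans (Nat.cast_nonneg _) ht1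
    have hk1 : 2 * p - H τ p ≤ ⌊t⌋₊ := Nat.le_floor ht1
    have hk2 : ⌊t⌋₊ ≤ (if p + 1 = progeny τ then 2 * progeny τ - 2
        else 2 * (p + 1) - H τ (p + 1)) := by
      calc ⌊t⌋₊ ≤ ⌊((if p + 1 = progeny τ then 2 * progeny τ - 2
          else 2 * (p + 1) - H τ (p + 1) : ℕ) : ℝ)⌋₊ := Nat.floor_le_floor ht2
        _ = _ := Nat.floor_natCast _
    have bd1 := cseq_bound_real hp hk1 hk2
    by_cases hft : (⌊t⌋₊ : ℝ) = t
    · rw [← hft, C_natCast]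
      exact bd1
    · have hlt : (⌊t⌋₊ : ℝ) < t := lt_of_le_of_ne (Nat.floor_le htnn) hft
      have hk2' : ⌊t⌋₊ + 1 ≤ (if p + 1 = progeny τ then 2 * progeny τ - 2
          else 2 * (p + 1) - H τ (p + 1)) := by
        have h1 : (⌊t⌋₊ : ℝ) < ((if p + 1 = progeny τ then 2 * progeny τ - 2
            else 2 * (p + 1) - H τ (p + 1) : ℕ) : ℝ) := lt_of_lt_of_le hlt ht2
        have h2 : ⌊t⌋₊ < (if p + 1 = progeny τ then 2 * progeny τ - 2
            else 2 * (p + 1) - H τ (p + 1)) := by exact_mod_cast h1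
        omega
      have bd2 := cseq_bound_real hp (le_trans hk1 (Nat.le_succ _)) hk2'
      have hf0 : 0 ≤ t - (⌊t⌋₊ : ℝ) := sub_nonneg.mpr (Nat.floor_le htnn)
      have hf1 : t - (⌊t⌋₊ : ℝ) ≤ 1 := by
        have := Nat.lt_floor_add_one t
        linarith
      have hC : C τ t - (H τ p : ℝ)
          = (1 - (t - (⌊t⌋₊ : ℝ))) * ((cseq τ ⌊t⌋₊ : ℝ) - (H τ p : ℝ))
            + (t - (⌊t⌋₊ : ℝ)) * ((cseq τ (⌊t⌋₊ + 1) : ℝ) - (H τ p : ℝ)) := by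
        rw [C]
        ring
      rw [hC]
      calc |(1 - (t - (⌊t⌋₊ : ℝ))) * ((cseq τ ⌊t⌋₊ : ℝ) - (H τ p : ℝ))
            + (t - (⌊t⌋₊ : ℝ)) * ((cseq τ (⌊t⌋₊ + 1) : ℝ) - (H τ p : ℝ))|
          ≤ |(1 - (t - (⌊t⌋₊ : ℝ))) * ((cseq τ ⌊t⌋₊ : ℝ) - (H τ p : ℝ))|
            + |(t - (⌊t⌋₊ : ℝ)) * ((cseq τ (⌊t⌋₊ + 1) : ℝ) - (H τ p : ℝ))| := abs_add_le _ _
        _ = (1 - (t - (⌊t⌋₊ : ℝ))) * |(cseq τ ⌊t⌋₊ : ℝ) - (H τ p : ℝ)|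
            + (t - (⌊t⌋₊ : ℝ)) * |(cseq τ (⌊t⌋₊ + 1) : ℝ) - (H τ p : ℝ)| := by
            rw [abs_mul, abs_mul, abs_of_nonneg (by linarith), abs_of_nonneg hf0]
        _ ≤ (1 - (t - (⌊t⌋₊ : ℝ))) * (|(H τ (p + 1) : ℝ) - (H τ p : ℝ)| + 1)
            + (t - (⌊t⌋₊ : ℝ)) * (|(H τ (p + 1) : ℝ) - (H τ p : ℝ)| + 1) := by
            exact add_le_add (mul_le_mul_of_nonneg_left bd1 (by linarith))
              (mul_le_mul_of_nonneg_left bd2 hf0)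
        _ = |(H τ (p + 1) : ℝ) - (H τ p : ℝ)| + 1 := by ring

open PTree in
/-- Contour/height comparison: C_{b_p}(τ) = H_p(τ), and for 0 ≤ p < ζ(τ),
sup_{t ∈ [b_p, b_{p+1}]} |C_t(τ) − H_p(τ)| ≤ |H_{p+1}(τ) − H_p(τ)| + 1. -/
theorem stmt15 (τ : PTree) (p : ℕ) (hp : p < progeny τ) :
    C τ (b τ p) = H τ p ∧
      ∀ t ∈ Set.Icc (b τ p) (b τ (p + 1)),
        |C τ t - (H τ p : ℝ)| ≤ |(H τ (p + 1) : ℝ) - (H τ p : ℝ)| + 1 :=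
  stmt15' τ p hp
end
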